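/- Let X be a compactum (a compact perfect metric space with more than one point), let n ≥ 2 be an integer, and let f : X → X be a continuous map. Then trans(F_n(f)) is dense in F_n(X) if and only if trans(SF_n(f)) is dense in SF_n(X); moreover, if trans(F_n(f)) is dense in F_n(X), then trans(f) is dense in X. -/

import Mathlib

open Metric Set TopologicalSpace Topology

variable (X : Type*) [MetricSpace X] (n : ℕ)

/-- The `n`-fold symmetric product `F_n(X)`: nonempty subsets of `X` with at most `n`
points, as a subspace of the nonempty compact subsets of `X` with the Hausdorff metric. -/
abbrev Fn := {A : NonemptyCompacts X // (A : Set X).Finite ∧ (A : Set X).ncard ≤ n}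

/-- The induced map `F_n(f)` on the `n`-fold symmetric product, `A ↦ f(A)`. -/
noncomputable def FnMap (f : X → X) : Fn X n → Fn X n := fun A =>
  ⟨⟨⟨f '' (A.1 : Set X), (A.2.1.image f).isCompact⟩, A.1.nonempty.image f⟩,
    A.2.1.image f, le_trans (Set.ncard_image_le A.2.1) A.2.2⟩

/-- `F_1(X) ⊆ F_n(X)`: the set of singletons. -/
def F1 : Set (Fn X n) := {A | ∃ x : X, (A.1 : Set X) = {x}}

/-- The setoid collapsing `F_1(X)` to a point. -/
def SFnSetoid : Setoid (Fn X n) where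
  r A B := A = B ∨ (A ∈ F1 X n ∧ B ∈ F1 X n)
  iseqv := by
    refine ⟨fun _ => Or.inl rfl, fun h => h.imp Eq.symm And.symm, fun h₁ h₂ => ?_⟩
    rcases h₁ with rfl | h₁
    · exact h₂
    · rcases h₂ with rfl | h₂
      · exact Or.inr h₁
      · exact Or.inr ⟨h₁.1, h₂.2⟩

/-- The `n`-fold symmetric product suspension `SF_n(X) = F_n(X)/F_1(X)`,
with the quotient topology. -/
abbrev SFn := Quotient (SFnSetoid X n)

/-- The quotient map `q : F_n(X) → SF_n(X)`. -/
def SFnQ : Fn X n → SFn X n := Quotient.mk (SFnSetoid X n)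

/-- The induced map `SF_n(f)` on the suspension, with `SF_n(f) ∘ q = q ∘ F_n(f)`. -/
noncomputable def SFnMap (f : X → X) : SFn X n → SFn X n :=
  Quotient.lift (fun A => SFnQ X n (FnMap X n f A))
    (fun A B h => Quotient.sound (by
      rcases h with rfl | ⟨⟨x, hx⟩, ⟨y, hy⟩⟩
      · exact Or.inl rfl
      · exact Or.inr ⟨⟨f x, by simp [FnMap, hx]⟩, ⟨f y, by simp [FnMap, hy]⟩⟩))

/-- The metric `ρ` on `SF_n(X)`:
`ρ(χ₁,χ₂) = H(F_1(X) ∪ q⁻¹(χ₁), F_1(X) ∪ q⁻¹(χ₂))` where `H` is the Hausdorff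
distance between subsets of `F_n(X)`. -/
noncomputable def SFnDist : SFn X n → SFn X n → ℝ := fun a b =>
  Metric.hausdorffDist (F1 X n ∪ SFnQ X n ⁻¹' {a}) (F1 X n ∪ SFnQ X n ⁻¹' {b})

/-- `z` is a transitive point of `g`: its forward orbit `{g^k(z) : k ∈ ℤ₊}` is dense. -/
def TransitivePt {Z : Type*} [TopologicalSpace Z] (g : Z → Z) (z : Z) : Prop :=
  Dense (Set.range fun k : ℕ => g^[k] z)

/-! ### Auxiliary lemmas -/

lemma myHausdorffEdist_ne_top (A B : Fn X n) :
    EMetric.hausdorffEdist (A.1 : Set X) (B.1 : Set X) ≠ ⊤ :=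
  Metric.hausdorffEdist_ne_top_of_nonempty_of_bounded A.1.nonempty B.1.nonempty
    A.1.isCompact.isBounded B.1.isCompact.isBounded

lemma myFnDist_eq (A B : Fn X n) :
    dist A B = Metric.hausdorffDist (A.1 : Set X) (B.1 : Set X) := by
  rw [Subtype.dist_eq, NonemptyCompacts.dist_eq]

/-- The singleton map `X → F_n(X)`. -/
def mySing (hn : 1 ≤ n) (x : X) : Fn X n :=
  ⟨⟨⟨{x}, isCompact_singleton⟩, ⟨x, rfl⟩⟩, Set.finite_singleton x, by
    show ({x} : Set X).ncard ≤ n; simpa [Set.ncard_singleton] using hn⟩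

lemma myHausdorffDist_singleton (x y : X) :
    Metric.hausdorffDist ({x} : Set X) {y} = dist x y := by
  apply le_antisymm
  · refine Metric.hausdorffDist_le_of_mem_dist dist_nonneg ?_ ?_
    · intro a ha
      rw [Set.mem_singleton_iff] at ha
      exact ⟨y, rfl, by rw [ha]⟩
    · intro b hb
      rw [Set.mem_singleton_iff] at hb
      exact ⟨x, rfl, by rw [hb, dist_comm]⟩
  · have h := Metric.infDist_le_hausdorffDist_of_mem (Set.mem_singleton x)
      (Metric.hausdorffEdist_ne_top_of_nonempty_of_bounded (Set.singleton_nonempty x)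
        (Set.singleton_nonempty y) Bornology.isBounded_singleton
        Bornology.isBounded_singleton)
    rwa [Metric.infDist_singleton] at h

lemma mySing_isometry (hn : 1 ≤ n) : Isometry (mySing X n hn) :=
  Isometry.of_dist_eq fun x y => by
    rw [myFnDist_eq]
    exact myHausdorffDist_singleton X x y

lemma myF1_eq_range (hn : 1 ≤ n) : F1 X n = Set.range (mySing X n hn) := by
  ext A
  constructor
  · rintro ⟨x, hx⟩
    exact ⟨x, Subtype.ext (NonemptyCompacts.ext hx.symm)⟩
  · rintro ⟨x, rfl⟩
    exact ⟨x, rfl⟩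

lemma myF1_closed [CompactSpace X] (hn : 1 ≤ n) : IsClosed (F1 X n) := by
  rw [myF1_eq_range X n hn]
  exact (isCompact_range (mySing_isometry X n hn).continuous).isClosed

/-- A two-point set as an element of `F_n(X)`. -/
def myTwo (hn : 2 ≤ n) (x y : X) : Fn X n :=
  ⟨⟨⟨{x, y}, (Set.finite_singleton y |>.insert x).isCompact⟩, ⟨x, Or.inl rfl⟩⟩,
    Set.finite_singleton y |>.insert x, by
      refine le_trans (le_trans (Set.ncard_insert_le x {y}) ?_) hn
      rw [Set.ncard_singleton]⟩

lemma myF1_compl_dense [CompactSpace X] (hX : Perfect (Set.univ : Set X)) (hn : 2 ≤ n) :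
    Dense (F1 X n)ᶜ := by
  rw [Metric.dense_iff]
  intro A ε hε
  by_cases hA : A ∈ F1 X n
  · obtain ⟨x, hx⟩ := hA
    have hacc := hX.acc x (Set.mem_univ x)
    obtain ⟨y, hy, hyx⟩ := accPt_iff_nhds.1 hacc (Metric.ball x (ε / 2))
      (Metric.ball_mem_nhds _ (by positivity))
    refine ⟨myTwo X n hn x y, ?_, ?_⟩
    · rw [Metric.mem_ball, myFnDist_eq, hx]
      have hset : ((myTwo X n hn x y).1 : Set X) = {x, y} := rfl
      rw [hset]
      have hle : Metric.hausdorffDist ({x, y} : Set X) {x} ≤ dist y x := by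
        refine Metric.hausdorffDist_le_of_mem_dist dist_nonneg ?_ ?_
        · rintro a (rfl | rfl)
          · exact ⟨a, rfl, by simpa using dist_nonneg⟩
          · exact ⟨x, rfl, le_rfl⟩
        · rintro b rfl
          exact ⟨b, Or.inl rfl, by simpa using dist_nonneg⟩
      have : dist y x < ε / 2 := Metric.mem_ball.1 hy.1
      linarith
    · rintro ⟨z, hz⟩
      have hxz : x ∈ ({z} : Set X) := hz ▸ Or.inl rfl
      have hyz : y ∈ ({z} : Set X) := hz ▸ Or.inr rfl
      exact hyx (hyz.trans hxz.symm)
  · exact ⟨A, Metric.mem_ball_self hε, hA⟩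

lemma mySFnQ_isQuotientMap : IsQuotientMap (SFnQ X n) :=
  isQuotientMap_quotient_mk'

lemma myQ_image_open {V : Set (Fn X n)} (hV : IsOpen V) (hVF : ∀ A ∈ V, A ∉ F1 X n) :
    IsOpen (SFnQ X n '' V) := by
  have hpre : SFnQ X n ⁻¹' (SFnQ X n '' V) = V := by
    apply Set.Subset.antisymm
    · rintro A ⟨B, hBV, hBA⟩
      rcases Quotient.exact hBA with rfl | ⟨hB, hA⟩
      · exact hBV
      · exact absurd hB (hVF B hBV)
    · exact Set.subset_preimage_image _ _
  rw [← (mySFnQ_isQuotientMap X n).isOpen_preimage, hpre]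
  exact hV

lemma myFnMap_iter_set (f : X → X) (k : ℕ) (A : Fn X n) :
    (((FnMap X n f)^[k] A).1 : Set X) = f^[k] '' (A.1 : Set X) := by
  induction k with
  | zero => simp
  | succ k ih =>
    rw [Function.iterate_succ_apply', Function.iterate_succ']
    have : ((FnMap X n f ((FnMap X n f)^[k] A)).1 : Set X)
        = f '' (((FnMap X n f)^[k] A).1 : Set X) := rfl
    rw [this, ih, ← Set.image_comp]

theorem stmt12 (X : Type*) [MetricSpace X] [CompactSpace X] [Nontrivial X]
    (hX : Perfect (Set.univ : Set X))
    (n : ℕ) (hn : 2 ≤ n) (f : X → X) (hf : Continuous f) :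
    (Dense {A : Fn X n | TransitivePt (FnMap X n f) A} ↔
      Dense {χ : SFn X n | TransitivePt (SFnMap X n f) χ}) ∧
    (Dense {A : Fn X n | TransitivePt (FnMap X n f) A} →
      Dense {x : X | TransitivePt f x}) := by
  have hn1 : 1 ≤ n := le_trans one_le_two hn
  have hq_cont : Continuous (SFnQ X n) := (mySFnQ_isQuotientMap X n).continuous
  have hq_surj : Function.Surjective (SFnQ X n) := fun χ => Quotient.exists_rep χ
  have hsc : Function.Semiconj (SFnQ X n) (FnMap X n f) (SFnMap X n f) := fun A => rfl
  have hF1closed : IsClosed (F1 X n) := myF1_closed X n hn1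
  have hF1cdense : Dense (F1 X n)ᶜ := myF1_compl_dense X n hX hn
  constructor
  · constructor
    · -- forward
      intro hD
      have key : ∀ A : Fn X n, TransitivePt (FnMap X n f) A →
          TransitivePt (SFnMap X n f) (SFnQ X n A) := by
        intro A hA
        have hfun : (fun k : ℕ => (SFnMap X n f)^[k] (SFnQ X n A)) =
            (SFnQ X n) ∘ (fun k : ℕ => (FnMap X n f)^[k] A) :=
          funext fun k => ((hsc.iterate_right k) A).symm
        rw [TransitivePt, hfun, Set.range_comp]
        exact hq_surj.denseRange.dense_image hq_cont hA
      have himg : SFnQ X n '' {A : Fn X n | TransitivePt (FnMap X n f) A} ⊆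
          {χ : SFn X n | TransitivePt (SFnMap X n f) χ} := by
        rintro χ ⟨A, hA, rfl⟩
        exact key A hA
      exact (hq_surj.denseRange.dense_image hq_cont hD).mono himg
    · -- backward
      intro hD'
      rw [dense_iff_inter_open]
      intro U hU hUne
      obtain ⟨B₀, hB₀U, hB₀F1⟩ := hF1cdense.inter_open_nonempty U hU hUne
      set V : Set (Fn X n) := U ∩ (F1 X n)ᶜ with hVdef
      have hVopen : IsOpen V := hU.inter hF1closed.isOpen_compl
      have hVF1 : ∀ A ∈ V, A ∉ F1 X n := fun A hA => hA.2
      have hqV : IsOpen (SFnQ X n '' V) := myQ_image_open X n hVopen hVF1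
      obtain ⟨χ, ⟨B, hBV, hBχ⟩, hχtrans⟩ :=
        hD'.inter_open_nonempty _ hqV ⟨_, Set.mem_image_of_mem _ ⟨hB₀U, hB₀F1⟩⟩
      refine ⟨B, hBV.1, ?_⟩
      -- show B is a transitive point of FnMap
      have horb : (F1 X n)ᶜ ⊆ closure (Set.range fun k : ℕ => (FnMap X n f)^[k] B) := by
        intro C hC
        rw [_root_.mem_closure_iff]
        intro W hW hCW
        set W' : Set (Fn X n) := W ∩ (F1 X n)ᶜ with hW'def
        have hW'open : IsOpen W' := hW.inter hF1closed.isOpen_compl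
        have hqW' : IsOpen (SFnQ X n '' W') :=
          myQ_image_open X n hW'open fun A hA => hA.2
        obtain ⟨ψ, hψW', ⟨k, hk⟩⟩ := hχtrans.inter_open_nonempty _ hqW'
          ⟨_, Set.mem_image_of_mem _ ⟨hCW, hC⟩⟩
        obtain ⟨D, hDW', hDψ⟩ := hψW'
        have hχB : (SFnMap X n f)^[k] χ = SFnQ X n ((FnMap X n f)^[k] B) := by
          rw [← hBχ]
          exact ((hsc.iterate_right k) B).symm
        have hψ : ψ = SFnQ X n ((FnMap X n f)^[k] B) := by rw [← hk]; exact hχB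
        rw [hψ] at hDψ
        rcases Quotient.exact hDψ with heq | ⟨hD1, hD2⟩
        · exact ⟨(FnMap X n f)^[k] B, heq ▸ hDW'.1, k, rfl⟩
        · exact absurd hD1 hDW'.2
      have : Dense (Set.range fun k : ℕ => (FnMap X n f)^[k] B) := by
        rw [dense_iff_closure_eq]
        apply Set.eq_univ_of_univ_subset
        calc (Set.univ : Set (Fn X n)) = closure (F1 X n)ᶜ := hF1cdense.closure_eq.symm
          _ ⊆ closure (closure (Set.range fun k : ℕ => (FnMap X n f)^[k] B)) :=
              closure_mono horb
          _ = _ := closure_closure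
      exact this
  · -- second part
    intro hD
    rw [Metric.dense_iff]
    intro x ε hε
    obtain ⟨A, hAball, hAtrans⟩ := (Metric.dense_iff.1 hD) (mySing X n hn1 x) ε hε
    obtain ⟨a, ha⟩ := A.1.nonempty
    have hax : dist a x < ε := by
      have h1 := Metric.infDist_le_hausdorffDist_of_mem ha (myHausdorffEdist_ne_top X n A (mySing X n hn1 x))
      rw [show ((mySing X n hn1 x).1 : Set X) = {x} from rfl, Metric.infDist_singleton] at h1
      calc dist a x ≤ Metric.hausdorffDist (A.1 : Set X) {x} := h1
        _ = dist A (mySing X n hn1 x) := by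
            rw [myFnDist_eq]; rfl
        _ < ε := Metric.mem_ball.1 hAball
    refine ⟨a, Metric.mem_ball.2 hax, ?_⟩
    -- a is a transitive point of f
    rw [Set.mem_setOf_eq, TransitivePt, Metric.dense_iff]
    intro y r hr
    obtain ⟨E, hEball, ⟨k, hk⟩⟩ := (Metric.dense_iff.1 hAtrans) (mySing X n hn1 y) r hr
    refine ⟨f^[k] a, ?_, k, rfl⟩
    have hmem : f^[k] a ∈ (((FnMap X n f)^[k] A).1 : Set X) := by
      rw [myFnMap_iter_set]
      exact Set.mem_image_of_mem _ ha
    have h2 := Metric.infDist_le_hausdorffDist_of_mem hmem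
      (myHausdorffEdist_ne_top X n ((FnMap X n f)^[k] A) (mySing X n hn1 y))
    rw [show ((mySing X n hn1 y).1 : Set X) = {y} from rfl, Metric.infDist_singleton] at h2
    rw [Metric.mem_ball]
    calc dist (f^[k] a) y ≤ Metric.hausdorffDist (((FnMap X n f)^[k] A).1 : Set X) {y} := h2
      _ = dist ((FnMap X n f)^[k] A) (mySing X n hn1 y) := by rw [myFnDist_eq]; rfl
      _ < r := by
          have hEq : (FnMap X n f)^[k] A = E := hk
          rw [hEq]
          exact Metric.mem_ball.1 hEball
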